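/- Let W be an initial revlex segment of degree m monomials in k[x_0,...,x_n] containing x_{n-1}^m, with least element μ. Then a degree m+1 monomial μ' does not lie in the set of products {x_i·ν : ν ∈ W, 0 ≤ i ≤ n} if and only if μ' ≺ x_n·μ in the revlex order; moreover every such μ' is divisible by x_n. -/
import Mathlib


/-- `RevLexGt α β` means `x^α ≻ x^β` in the degree reverse lexicographic order. -/
def RevLexGt {N : ℕ} (α β : Fin N →₀ ℕ) : Prop :=
  ∃ i, α i < β i ∧ ∀ j, i < j → α j = β j

/-- `W` is an initial revlex segment in degree `m`. -/
def IsRevLexSegment {N : ℕ} (m : ℕ) (W : Set (Fin N →₀ ℕ)) : Prop :=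
  (∀ α ∈ W, ∑ i, α i = m) ∧
  ∀ α β : Fin N →₀ ℕ, (∑ i, α i = m) → β ∈ W → RevLexGt α β → α ∈ W

lemma rlt_irrefl {N : ℕ} (α : Fin N →₀ ℕ) : ¬ RevLexGt α α := by
  rintro ⟨i, h1, _⟩; omega

lemma rlt_asymm {N : ℕ} {α β : Fin N →₀ ℕ} (h : RevLexGt α β) : ¬ RevLexGt β α := by
  obtain ⟨i, h1, h2⟩ := h
  rintro ⟨i', h1', h2'⟩
  rcases lt_trichotomy i i' with hlt | heq | hgt
  · have := h2 i' hlt; omega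
  · subst heq; omega
  · have := h2' i hgt; omega

lemma rlt_trans {N : ℕ} {α β γ : Fin N →₀ ℕ} (h : RevLexGt α β) (h' : RevLexGt β γ) :
    RevLexGt α γ := by
  obtain ⟨i, h1, h2⟩ := h
  obtain ⟨i', h1', h2'⟩ := h'
  rcases lt_trichotomy i i' with hlt | heq | hgt
  · exact ⟨i', by have := h2 i' hlt; omega, fun j hj => by
      rw [h2 j (lt_trans hlt hj), h2' j hj]⟩
  · subst heq
    exact ⟨i, by omega, fun j hj => by rw [h2 j hj, h2' j hj]⟩
  · exact ⟨i, by have := h2' i hgt; omega, fun j hj => by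
      rw [h2 j hj, h2' j (lt_trans hgt hj)]⟩

lemma rlt_trichot {N : ℕ} {α β : Fin N →₀ ℕ} (h : α ≠ β) :
    RevLexGt α β ∨ RevLexGt β α := by
  have hne : (Finset.univ.filter (fun j => α j ≠ β j)).Nonempty := by
    by_contra hc
    apply h
    ext i
    by_contra hi
    exact hc ⟨i, Finset.mem_filter.2 ⟨Finset.mem_univ i, hi⟩⟩
  set S := Finset.univ.filter (fun j => α j ≠ β j) with hS
  have hmem : S.max' hne ∈ S := S.max'_mem hne
  have hne' : α (S.max' hne) ≠ β (S.max' hne) := (Finset.mem_filter.1 hmem).2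
  have heq : ∀ j, S.max' hne < j → α j = β j := by
    intro j hj
    by_contra hc
    have : j ∈ S := Finset.mem_filter.2 ⟨Finset.mem_univ j, hc⟩
    exact absurd (S.le_max' j this) (not_le.2 hj)
  rcases lt_or_gt_of_ne hne' with hlt | hgt
  · exact Or.inl ⟨S.max' hne, hlt, heq⟩
  · exact Or.inr ⟨S.max' hne, hgt, fun j hj => (heq j hj).symm⟩

lemma rlt_add_right {N : ℕ} {α β : Fin N →₀ ℕ} (γ : Fin N →₀ ℕ) (h : RevLexGt α β) :
    RevLexGt (α + γ) (β + γ) := by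
  obtain ⟨i, h1, h2⟩ := h
  exact ⟨i, by simp only [Finsupp.add_apply]; omega,
    fun j hj => by simp only [Finsupp.add_apply, h2 j hj]⟩

lemma rlt_add_right' {N : ℕ} {α β γ : Fin N →₀ ℕ} (h : RevLexGt (α + γ) (β + γ)) :
    RevLexGt α β := by
  obtain ⟨i, h1, h2⟩ := h
  simp only [Finsupp.add_apply] at h1 h2
  exact ⟨i, by omega, fun j hj => by have := h2 j hj; omega⟩

/-- `ge` in revlex: equal or greater -/
def RevLexGe {N : ℕ} (α β : Fin N →₀ ℕ) : Prop := α = β ∨ RevLexGt α β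

lemma rge_trans {N : ℕ} {α β γ : Fin N →₀ ℕ} (h : RevLexGe α β) (h' : RevLexGe β γ) :
    RevLexGe α γ := by
  rcases h with rfl | h <;> rcases h' with rfl | h'
  · exact Or.inl rfl
  · exact Or.inr h'
  · exact Or.inr h
  · exact Or.inr (rlt_trans h h')

lemma sum_add_single {N : ℕ} (α : Fin N →₀ ℕ) (i : Fin N) :
    ∑ j : Fin N, (α + Finsupp.single i 1 : Fin N →₀ ℕ) j = (∑ j : Fin N, α j) + 1 := by
  simp [Finsupp.add_apply, Finsupp.single_apply, Finset.sum_add_distrib]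

/-- For an initial revlex segment `W` of degree `m` monomials containing `x_{n-1}^m`,
with least element `μ`: a degree `m+1` monomial `μ'` fails to be a product `x_i · ν`
with `ν ∈ W` if and only if `μ' ≺ x_n · μ`; moreover every such `μ'` is divisible by `x_n`. -/
theorem stmt2 (n m : ℕ) (hn : 1 ≤ n) (W : Set (Fin (n + 1) →₀ ℕ))
    (hW : IsRevLexSegment m W)
    (hx : Finsupp.single (⟨n - 1, by omega⟩ : Fin (n + 1)) m ∈ W)
    (μ : Fin (n + 1) →₀ ℕ) (hμW : μ ∈ W)
    (hleast : ∀ ν ∈ W, ν ≠ μ → RevLexGt ν μ)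
    (μ' : Fin (n + 1) →₀ ℕ) (hdeg : ∑ i, μ' i = m + 1) :
    ((¬ ∃ (i : Fin (n + 1)) (ν : Fin (n + 1) →₀ ℕ), ν ∈ W ∧ μ' = ν + Finsupp.single i 1) ↔
        RevLexGt (μ + Finsupp.single (Fin.last n) 1) μ') ∧
      ((¬ ∃ (i : Fin (n + 1)) (ν : Fin (n + 1) →₀ ℕ), ν ∈ W ∧ μ' = ν + Finsupp.single i 1) →
        0 < μ' (Fin.last n)) := by
  -- any product x_i ν with ν ∈ W is ⪰ μ + e_n
  have hge : ∀ (i : Fin (n + 1)) (ν : Fin (n + 1) →₀ ℕ), ν ∈ W →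
      RevLexGe (ν + Finsupp.single i 1) (μ + Finsupp.single (Fin.last n) 1) := by
    intro i ν hν
    have h1 : RevLexGe (ν + Finsupp.single i 1) (ν + Finsupp.single (Fin.last n) 1) := by
      by_cases hil : i = Fin.last n
      · subst hil; exact Or.inl rfl
      · refine Or.inr ⟨Fin.last n, ?_, fun j hj => absurd (Fin.le_last j) (not_le.2 hj)⟩
        simp [Finsupp.single_apply, hil]
    have h2 : RevLexGe (ν + Finsupp.single (Fin.last n) 1)
        (μ + Finsupp.single (Fin.last n) 1) := by
      by_cases hνμ : ν = μ
      · subst hνμ; exact Or.inl rfl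
      · exact Or.inr (rlt_add_right _ (hleast ν hν hνμ))
    exact rge_trans h1 h2
  -- the key equivalence
  have key : (∃ (i : Fin (n + 1)) (ν : Fin (n + 1) →₀ ℕ), ν ∈ W ∧
        μ' = ν + Finsupp.single i 1) ↔
      ¬ RevLexGt (μ + Finsupp.single (Fin.last n) 1) μ' := by
    constructor
    · rintro ⟨i, ν, hν, rfl⟩ hcon
      rcases hge i ν hν with heq | hgt
      · rw [heq] at hcon; exact rlt_irrefl _ hcon
      · exact rlt_asymm hgt hcon
    · intro hnot
      -- take the largest index i with μ' i > 0
      have hSne : (Finset.univ.filter (fun j => μ' j ≠ 0)).Nonempty := by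
        by_contra hc
        have : ∀ j, μ' j = 0 := by
          intro j; by_contra hj
          exact hc ⟨j, Finset.mem_filter.2 ⟨Finset.mem_univ j, hj⟩⟩
        simp only [this, Finset.sum_const_zero] at hdeg
        omega
      obtain ⟨i, hipos, hzero⟩ : ∃ i : Fin (n + 1), 0 < μ' i ∧ ∀ j, i < j → μ' j = 0 := by
        set S := Finset.univ.filter (fun j => μ' j ≠ 0) with hS
        refine ⟨S.max' hSne, Nat.pos_of_ne_zero (Finset.mem_filter.1 (S.max'_mem hSne)).2,
          fun j hj => ?_⟩
        by_contra hc
        exact absurd (S.le_max' j (Finset.mem_filter.2 ⟨Finset.mem_univ j, hc⟩)) (not_le.2 hj)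
      have hle : Finsupp.single i 1 ≤ μ' := (Finsupp.single_le_iff).2 hipos
      set ν := μ' - Finsupp.single i 1 with hν
      have hsplit : μ' = ν + Finsupp.single i 1 := by
        rw [hν, tsub_add_cancel_of_le hle]
      have hνdeg : ∑ j, ν j = m := by
        have := sum_add_single ν i
        rw [← hsplit] at this
        omega
      have hνzero : ∀ j, i < j → ν j = 0 := by
        intro j hj
        have h1 : ν j ≤ μ' j := by
          rw [hν, Finsupp.tsub_apply]; exact Nat.sub_le _ _
        have := hzero j hj
        omega
      refine ⟨i, ν, ?_, hsplit⟩
      by_cases hil : i = Fin.last n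
      · -- ν ⪰ μ, so ν ∈ W
        have hμν : ¬ RevLexGt μ ν := by
          intro hc
          apply hnot
          rw [hsplit, hil]
          exact rlt_add_right _ hc
        by_cases hνμ : ν = μ
        · rwa [hνμ]
        · rcases rlt_trichot hνμ with h | h
          · exact hW.2 ν μ hνdeg hμW h
          · exact absurd h hμν
      · -- i < last; compare ν with single (n-1) m
        have hilast : i < Fin.last n := lt_of_le_of_ne (Fin.le_last i) hil
        have hilt : (i : ℕ) < n := hilast
        have hνlast : ν (Fin.last n) = 0 := hνzero (Fin.last n) hilast
        set p : Fin (n + 1) := ⟨n - 1, by omega⟩ with hp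
        have hpv : (p : ℕ) = n - 1 := rfl
        by_cases hcase : ν p < m
        · -- ν ≻ single p m
          have hgt : RevLexGt ν (Finsupp.single p m) := by
            refine ⟨p, ?_, fun j hj => ?_⟩
            · simpa [Finsupp.single_apply] using hcase
            · have h1 : (p : ℕ) < (j : ℕ) := hj
              have h2 : (j : ℕ) ≤ n := Nat.lt_succ_iff.1 j.isLt
              have hjl : j = Fin.last n := Fin.ext (by simp [Fin.last]; omega)
              rw [hjl, hνlast]
              have hpl : p ≠ Fin.last n := by
                intro hc
                have : (p : ℕ) = n := congrArg Fin.val hc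
                omega
              rw [Finsupp.single_apply, if_neg hpl]
          exact hW.2 ν (Finsupp.single p m) hνdeg hx hgt
        · -- ν p = m and ν = single p m
          push_neg at hcase
          have hsum_le : ν p ≤ ∑ j, ν j :=
            Finset.single_le_sum (fun j _ => Nat.zero_le _) (Finset.mem_univ p)
          have hνp : ν p = m := by omega
          have hothers : ∀ j, j ≠ p → ν j = 0 := by
            intro j hj
            have heq := Finset.add_sum_erase Finset.univ ν (Finset.mem_univ p)
            have h2 : ν j ≤ ∑ k ∈ Finset.univ.erase p, ν k :=
              Finset.single_le_sum (fun k _ => Nat.zero_le _)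
                (Finset.mem_erase.2 ⟨hj, Finset.mem_univ j⟩)
            omega
          have hνσ : ν = Finsupp.single p m := by
            ext j
            rw [Finsupp.single_apply]
            by_cases hj : j = p
            · subst hj; rw [if_pos rfl, hνp]
            · rw [hothers j hj, if_neg (fun hc => hj hc.symm)]
          rwa [hνσ]
  constructor
  · constructor
    · intro hnp
      by_contra hc
      exact hnp (key.2 hc)
    · intro hq hp
      exact (key.1 hp) hq
  · intro hnp
    have hrl : RevLexGt (μ + Finsupp.single (Fin.last n) 1) μ' := by
      by_contra hc
      exact hnp (key.2 hc)
    obtain ⟨i, h1, h2⟩ := hrl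
    rcases lt_or_eq_of_le (Fin.le_last i) with hlt | heq
    · have h3 := h2 (Fin.last n) hlt
      simp only [Finsupp.add_apply, Finsupp.single_apply, if_pos] at h3
      omega
    · rw [heq] at h1
      simp only [Finsupp.add_apply, Finsupp.single_apply, if_pos] at h1
      omega
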